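/- arXiv:1709.02910 — 9 statements merged into one kernel-verified Lean document; each statement's English description precedes it below -/
import Mathlib

section
/- For a monotone submodular function f: 2^E → ℝ≥0 with f(∅)=0, the function g(X) := f(X) - Σ_{i∈X} f(i | E∖{i}) is monotone and submodular. -/
open Finset

def Submodular {E : Type*} [DecidableEq E] (f : Finset E → ℝ) : Prop :=
  ∀ X Y : Finset E, f (X ∩ Y) + f (X ∪ Y) ≤ f X + f Y

def MonotoneSF {E : Type*} (f : Finset E → ℝ) : Prop :=
  ∀ X Y : Finset E, X ⊆ Y → f X ≤ f Y

theorem difficult_part_monotone_submodular {E : Type*} [DecidableEq E] [Fintype E]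
    (f : Finset E → ℝ) (hmono : MonotoneSF f) (hsub : Submodular f)
    (h0 : f ∅ = 0) (hnonneg : ∀ X : Finset E, 0 ≤ f X) :
    MonotoneSF (fun X => f X - ∑ i ∈ X, (f univ - f (univ.erase i))) ∧
    Submodular (fun X => f X - ∑ i ∈ X, (f univ - f (univ.erase i))) := by
  set g : Finset E → ℝ := fun X => f X - ∑ i ∈ X, (f univ - f (univ.erase i)) with hg
  have step : ∀ (X : Finset E) (i : E), i ∉ X → g X ≤ g (insert i X) := by
    intro X i hi
    have hXsub : X ⊆ univ.erase i := by
      intro x hx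
      exact mem_erase.mpr ⟨fun h => hi (h ▸ hx), mem_univ x⟩
    have h1 := hsub (insert i X) (univ.erase i)
    have hinter : insert i X ∩ univ.erase i = X := by
      ext x
      simp only [mem_inter, mem_insert, mem_erase, mem_univ, and_true]
      constructor
      · rintro ⟨h | h, hne⟩
        · exact absurd h hne
        · exact h
      · intro h
        exact ⟨Or.inr h, fun he => hi (he ▸ h)⟩
    have hunion : insert i X ∪ univ.erase i = univ := by
      apply eq_univ_of_forall
      intro x
      by_cases hx : x = i
      · exact mem_union_left _ (mem_insert.mpr (Or.inl hx))
      · exact mem_union_right _ (mem_erase.mpr ⟨hx, mem_univ x⟩)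
    rw [hinter, hunion] at h1
    have hsum : ∑ j ∈ insert i X, (f univ - f (univ.erase j))
        = (f univ - f (univ.erase i)) + ∑ j ∈ X, (f univ - f (univ.erase j)) :=
      sum_insert hi
    simp only [hg, hsum]
    linarith
  constructor
  · intro X Y hXY
    have key : ∀ n : ℕ, ∀ X Y : Finset E, X ⊆ Y → (Y \ X).card = n → g X ≤ g Y := by
      intro n
      induction n with
      | zero =>
        intro X Y hXY hc
        have : Y \ X = ∅ := card_eq_zero.mp hc
        have : Y ⊆ X := fun y hy => by
          by_contra h
          exact absurd (mem_sdiff.mpr ⟨hy, h⟩) (by simp [this])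
        rw [Subset.antisymm hXY this]
      | succ n ih =>
        intro X Y hXY hc
        obtain ⟨i, hi⟩ : (Y \ X).Nonempty := card_pos.mp (by omega)
        have hiY : i ∈ Y := (mem_sdiff.mp hi).1
        have hiX : i ∉ X := (mem_sdiff.mp hi).2
        have h1 : insert i X ⊆ Y := insert_subset hiY hXY
        have h2 : (Y \ insert i X).card = n := by
          have : Y \ insert i X = (Y \ X).erase i := by
            ext x; simp [mem_sdiff, mem_erase, and_comm, not_or]; tauto
          rw [this, card_erase_of_mem hi, hc]; omega
        exact le_trans (step X i hiX) (ih _ _ h1 h2)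
    exact key _ X Y hXY rfl
  · intro X Y
    have hs : ∑ j ∈ X ∪ Y, (fun j => f univ - f (univ.erase j)) j
        + ∑ j ∈ X ∩ Y, (fun j => f univ - f (univ.erase j)) j
        = ∑ j ∈ X, (fun j => f univ - f (univ.erase j)) j
        + ∑ j ∈ Y, (fun j => f univ - f (univ.erase j)) j :=
      sum_union_inter
    have := hsub X Y
    simp only [hg]
    simp only at hs
    linarith
end

section
/- Every M♮-concave set function is submodular. -/
open Finset

/-- A set function is M♮-concave. -/
def MConcave {E : Type*} [DecidableEq E] (f : Finset E → ℝ) : Prop :=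
  ∀ X Y : Finset E, ∀ i ∈ X \ Y,
    f X + f Y ≤ f (X.erase i) + f (insert i Y) ∨
    ∃ j ∈ Y \ X, f X + f Y ≤ f (insert j (X.erase i)) + f ((insert i Y).erase j)

lemma mconcave_key {E : Type*} [DecidableEq E] (f : Finset E → ℝ) (hf : MConcave f)
    {X Y : Finset E} {i : E} (hYX : Y ⊆ X) (hiX : i ∉ X) :
    f (insert i X) + f Y ≤ f X + f (insert i Y) := by
  have hiY : i ∉ Y := fun h => hiX (hYX h)
  have hi : i ∈ insert i X \ Y := by simp [hiY]
  rcases hf (insert i X) Y i hi with h | ⟨j, hj, _⟩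
  · rwa [Finset.erase_insert hiX] at h
  · exfalso
    rw [Finset.mem_sdiff] at hj
    exact hj.2 (Finset.mem_insert_of_mem (hYX hj.1))

lemma mconcave_aux {E : Type*} [DecidableEq E] (f : Finset E → ℝ) (hf : MConcave f) :
    ∀ n (X Y : Finset E), (Y \ X).card ≤ n → f (X ∩ Y) + f (X ∪ Y) ≤ f X + f Y := by
  intro n
  induction n with
  | zero =>
    intro X Y h
    have hYX : Y ⊆ X := by
      rw [Nat.le_zero, Finset.card_eq_zero, Finset.sdiff_eq_empty_iff_subset] at h
      exact h
    rw [Finset.inter_eq_right.mpr hYX, Finset.union_eq_left.mpr hYX]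
    linarith
  | succ n ih =>
    intro X Y h
    by_cases hYX : Y ⊆ X
    · rw [Finset.inter_eq_right.mpr hYX, Finset.union_eq_left.mpr hYX]
      linarith
    · obtain ⟨i, hiY, hiX⟩ : ∃ i, i ∈ Y ∧ i ∉ X := by
        rcases Finset.not_subset.mp hYX with ⟨i, h1, h2⟩
        exact ⟨i, h1, h2⟩
      have hcard : (Y \ insert i X).card ≤ n := by
        have : Y \ insert i X = (Y \ X).erase i := by
          ext x; simp [Finset.mem_sdiff, Finset.mem_erase, and_comm]
          tauto
        rw [this]
        have hmem : i ∈ Y \ X := Finset.mem_sdiff.mpr ⟨hiY, hiX⟩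
        have := Finset.card_erase_of_mem hmem
        omega
      have h1 := ih (insert i X) Y hcard
      have h2 := mconcave_key f hf (Finset.inter_subset_left (s₁ := X) (s₂ := Y)) hiX
      have e1 : insert i X ∩ Y = insert i (X ∩ Y) := Finset.insert_inter_of_mem hiY
      have e2 : insert i X ∪ Y = X ∪ Y := by
        rw [Finset.insert_union, Finset.insert_eq_self.mpr (Finset.mem_union_right _ hiY)]
      rw [e1, e2] at h1
      linarith

theorem mconcave_submodular {E : Type*} [DecidableEq E]
    (f : Finset E → ℝ) (hf : MConcave f) : Submodular f := by
  intro X Y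
  exact mconcave_aux f hf (Y \ X).card X Y le_rfl
end

section
/- Let L be a laminar family on E and for each L ∈ L let φ_L: ℕ → ℝ be concave. Then f(X) := Σ_{L∈L} φ_L(|X ∩ L|) is M♮-concave. -/
open Finset

lemma conc_step (g : ℕ → ℝ) (h : ∀ k, g (k+2) - g (k+1) ≤ g (k+1) - g k)
    {a b : ℕ} (hba : b ≤ a) : g (a+1) + g b ≤ g a + g (b+1) := by
  have hanti : Antitone (fun k => g (k+1) - g k) :=
    antitone_nat_of_succ_le (fun n => h n)
  have := hanti hba
  simp only at this
  linarith

lemma bad_union {E : Type*} [DecidableEq E] (X Y : Finset E) :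
    ∀ F : Finset (Finset E),
      (∀ A ∈ F, ∀ B ∈ F, A ⊆ B ∨ B ⊆ A ∨ A ∩ B = ∅) →
      (∀ L ∈ F, (Y ∩ L).card ≤ (X ∩ L).card) →
      (Y ∩ F.sup id).card ≤ (X ∩ F.sup id).card := by
  intro F
  induction F using Finset.strongInduction with
  | _ F ih =>
    intro hlam hbad
    rcases F.eq_empty_or_nonempty with rfl | hne
    · simp
    obtain ⟨M, hM, hMmax⟩ := F.exists_max_image Finset.card hne
    set F₂ := F.filter (fun L => ¬ L ⊆ M) with hF₂
    have hF₂ss : F₂ ⊂ F := Finset.filter_ssubset.2 ⟨M, hM, by simp⟩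
    have hdisj : Disjoint M (F₂.sup id) := by
      rw [Finset.disjoint_right]
      intro x hx hxM
      rw [Finset.mem_sup] at hx
      obtain ⟨L, hL, hxL⟩ := hx
      rw [hF₂, Finset.mem_filter] at hL
      obtain ⟨hLF, hLM⟩ := hL
      rcases hlam L hLF M hM with h | h | h
      · exact hLM h
      · have hML : M = L := Finset.eq_of_subset_of_card_le h (hMmax L hLF)
        exact hLM (le_of_eq hML.symm)
      · exact absurd (Finset.mem_inter.2 ⟨hxL, hxM⟩) (by simp [h])
    have hsup : F.sup id = M ∪ F₂.sup id := by
      rw [← Finset.sup_eq_union]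
      apply le_antisymm
      · apply Finset.sup_le
        intro L hL
        by_cases hLM : L ⊆ M
        · exact le_sup_of_le_left hLM
        · exact le_sup_of_le_right (Finset.le_sup (f := id) (Finset.mem_filter.2 ⟨hL, hLM⟩))
      · apply sup_le
        · exact Finset.le_sup (f := id) hM
        · exact Finset.sup_mono (Finset.filter_subset _ _)
    have key : ∀ Z : Finset E, (Z ∩ F.sup id).card
        = (Z ∩ M).card + (Z ∩ F₂.sup id).card := by
      intro Z
      rw [hsup, Finset.inter_union_distrib_left, Finset.card_union_of_disjoint]
      exact Finset.disjoint_of_subset_left Finset.inter_subset_right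
        (Finset.disjoint_of_subset_right Finset.inter_subset_right hdisj)
    rw [key X, key Y]
    have h2 := ih F₂ hF₂ss
      (fun A hA B hB => hlam A (Finset.mem_of_mem_filter _ hA) B (Finset.mem_of_mem_filter _ hB))
      (fun L hL => hbad L (Finset.mem_of_mem_filter _ hL))
    have h1 := hbad M hM
    omega

/-- A family of sets is laminar. -/
def Laminar {E : Type*} [DecidableEq E] (𝓛 : Finset (Finset E)) : Prop :=
  ∀ A ∈ 𝓛, ∀ B ∈ 𝓛, A ⊆ B ∨ B ⊆ A ∨ A ∩ B = ∅

theorem laminar_concave_mconcave {E : Type*} [DecidableEq E]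
    (𝓛 : Finset (Finset E)) (hlam : Laminar 𝓛) (φ : Finset E → ℕ → ℝ)
    (hφ : ∀ L ∈ 𝓛, ∀ k : ℕ, φ L (k + 2) - φ L (k + 1) ≤ φ L (k + 1) - φ L k) :
    MConcave (fun X : Finset E => ∑ L ∈ 𝓛, φ L (X ∩ L).card) := by
  intro X Y i hi
  rw [Finset.mem_sdiff] at hi
  obtain ⟨hiX, hiY⟩ := hi
  have hij_case1 : ∀ L ∈ 𝓛, i ∈ L → (Y ∩ L).card < (X ∩ L).card →
      φ L (X ∩ L).card + φ L (Y ∩ L).card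
        ≤ φ L ((X.erase i) ∩ L).card + φ L ((insert i Y) ∩ L).card := by
    intro L hL hiL hb
    have hia : i ∈ X ∩ L := Finset.mem_inter.2 ⟨hiX, hiL⟩
    have hib : i ∉ Y ∩ L := fun h => hiY (Finset.mem_inter.1 h).1
    rw [Finset.erase_inter, Finset.insert_inter_of_mem hiL,
      Finset.card_erase_of_mem hia, Finset.card_insert_of_notMem hib]
    obtain ⟨a, ha⟩ : ∃ a, (X ∩ L).card = a + 1 := ⟨(X ∩ L).card - 1, by omega⟩
    rw [ha]
    simp only [Nat.add_sub_cancel]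
    have := conc_step (φ L) (hφ L hL) (show (Y ∩ L).card ≤ a by omega)
    linarith
  by_cases h1 : ∀ L ∈ 𝓛, i ∈ L → (Y ∩ L).card < (X ∩ L).card
  · left
    simp only
    rw [← Finset.sum_add_distrib, ← Finset.sum_add_distrib]
    apply Finset.sum_le_sum
    intro L hL
    by_cases hiL : i ∈ L
    · exact hij_case1 L hL hiL (h1 L hL hiL)
    · rw [Finset.erase_inter, Finset.insert_inter_of_notMem hiL,
        Finset.erase_eq_of_notMem (fun h => hiL (Finset.mem_inter.1 h).2)]
  · push_neg at h1
    obtain ⟨L', hL'𝓛, hiL', hcard'⟩ := h1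
    set S := 𝓛.filter (fun L => i ∈ L ∧ (X ∩ L).card ≤ (Y ∩ L).card) with hS
    have hSne : S.Nonempty := ⟨L', Finset.mem_filter.2 ⟨hL'𝓛, hiL', hcard'⟩⟩
    obtain ⟨L₀, hL₀S, hmin⟩ := S.exists_min_image Finset.card hSne
    rw [hS, Finset.mem_filter] at hL₀S
    obtain ⟨hL₀𝓛, hiL₀, hcard₀⟩ := hL₀S
    set Bad := 𝓛.filter (fun L => L ⊆ L₀ ∧ i ∉ L ∧ (Y ∩ L).card ≤ (X ∩ L).card)
      with hBad
    set B := Bad.sup id with hB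
    have hBL₀ : B ⊆ L₀ := by
      show B ≤ L₀
      apply Finset.sup_le
      intro L hL
      exact (Finset.mem_filter.1 hL).2.1
    have hiB : i ∉ B := by
      rw [hB, Finset.mem_sup]
      rintro ⟨L, hL, hiL⟩
      exact (Finset.mem_filter.1 hL).2.2.1 hiL
    have hjnotbad : ∀ j, j ∉ B → ∀ L ∈ 𝓛, j ∈ L → L ⊆ L₀ → i ∉ L →
        (X ∩ L).card < (Y ∩ L).card := by
      intro j hjB L hL hjL hLL₀ hiL
      by_contra h
      push_neg at h
      exact hjB (Finset.mem_sup.2 ⟨L, Finset.mem_filter.2 ⟨hL, hLL₀, hiL, h⟩, hjL⟩)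
    have hYXB : (Y ∩ B).card ≤ (X ∩ B).card := by
      apply bad_union X Y Bad
      · intro A hA Bb hBb
        exact hlam A (Finset.mem_of_mem_filter _ hA) Bb (Finset.mem_of_mem_filter _ hBb)
      · intro L hL
        exact (Finset.mem_filter.1 hL).2.2.2
    have hsplit : ∀ Z : Finset E, (Z ∩ L₀).card = (Z ∩ (L₀ \ B)).card + (Z ∩ B).card := by
      intro Z
      have heq : Z ∩ L₀ = (Z ∩ (L₀ \ B)) ∪ (Z ∩ B) := by
        ext x
        simp only [Finset.mem_inter, Finset.mem_union, Finset.mem_sdiff]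
        constructor
        · rintro ⟨hxZ, hxL₀⟩
          by_cases hxB : x ∈ B
          · exact Or.inr ⟨hxZ, hxB⟩
          · exact Or.inl ⟨hxZ, hxL₀, hxB⟩
        · rintro (⟨hxZ, hxL₀, _⟩ | ⟨hxZ, hxB⟩)
          · exact ⟨hxZ, hxL₀⟩
          · exact ⟨hxZ, hBL₀ hxB⟩
      rw [heq, Finset.card_union_of_disjoint]
      rw [Finset.disjoint_left]
      rintro x hx hx'
      exact (Finset.mem_sdiff.1 (Finset.mem_inter.1 hx).2).2 (Finset.mem_inter.1 hx').2
    have hScard : (X ∩ (L₀ \ B)).card ≤ (Y ∩ (L₀ \ B)).card := by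
      have h1 := hsplit X
      have h2 := hsplit Y
      omega
    have hiS : i ∈ X ∩ (L₀ \ B) :=
      Finset.mem_inter.2 ⟨hiX, Finset.mem_sdiff.2 ⟨hiL₀, hiB⟩⟩
    have hjex : ((Y ∩ (L₀ \ B)) \ X).Nonempty := by
      by_contra h
      rw [Finset.not_nonempty_iff_eq_empty, Finset.sdiff_eq_empty_iff_subset] at h
      have hsub : Y ∩ (L₀ \ B) ⊆ X ∩ (L₀ \ B) := fun x hx =>
        Finset.mem_inter.2 ⟨h hx, (Finset.mem_inter.1 hx).2⟩
      have heq := Finset.eq_of_subset_of_card_le hsub hScard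
      have : i ∈ Y ∩ (L₀ \ B) := heq ▸ hiS
      exact hiY (Finset.mem_inter.1 this).1
    obtain ⟨j, hj⟩ := hjex
    rw [Finset.mem_sdiff, Finset.mem_inter, Finset.mem_sdiff] at hj
    obtain ⟨⟨hjY, hjL₀, hjB⟩, hjX⟩ := hj
    have hij : i ≠ j := fun h => hjX (h ▸ hiX)
    right
    refine ⟨j, Finset.mem_sdiff.2 ⟨hjY, hjX⟩, ?_⟩
    simp only
    rw [← Finset.sum_add_distrib, ← Finset.sum_add_distrib]
    apply Finset.sum_le_sum
    intro L hL
    by_cases hiL : i ∈ L <;> by_cases hjL : j ∈ L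
    · -- i ∈ L, j ∈ L : cards unchanged
      have hia : i ∈ X ∩ L := Finset.mem_inter.2 ⟨hiX, hiL⟩
      have hib : i ∉ Y ∩ L := fun h => hiY (Finset.mem_inter.1 h).1
      have e1 : (insert j (X.erase i) ∩ L).card = (X ∩ L).card := by
        rw [Finset.insert_inter_of_mem hjL, Finset.erase_inter,
          Finset.card_insert_of_notMem
            (fun h => hjX (Finset.mem_inter.1 (Finset.mem_of_mem_erase h)).1),
          Finset.card_erase_of_mem hia]
        have : 1 ≤ (X ∩ L).card := Finset.card_pos.2 ⟨i, hia⟩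
        omega
      have e2 : (((insert i Y).erase j) ∩ L).card = (Y ∩ L).card := by
        rw [Finset.erase_inter, Finset.insert_inter_of_mem hiL,
          Finset.card_erase_of_mem
            (Finset.mem_insert_of_mem (Finset.mem_inter.2 ⟨hjY, hjL⟩)),
          Finset.card_insert_of_notMem hib]
        omega
      rw [e1, e2]
    · -- i ∈ L, j ∉ L : strict case from minimality of L₀
      have hLL₀ : L ⊆ L₀ := by
        rcases hlam L hL L₀ hL₀𝓛 with h | h | h
        · exact h
        · exact absurd (h hjL₀) hjL
        · exact absurd (Finset.mem_inter.2 ⟨hiL, hiL₀⟩) (by simp [h])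
      have hLne : L ≠ L₀ := fun h => hjL (h ▸ hjL₀)
      have hcardLt : L.card < L₀.card :=
        Finset.card_lt_card (HasSubset.Subset.ssubset_of_ne hLL₀ hLne)
      have hb : (Y ∩ L).card < (X ∩ L).card := by
        by_contra h
        push_neg at h
        have : L ∈ S := Finset.mem_filter.2 ⟨hL, hiL, h⟩
        have := hmin L this
        omega
      rw [Finset.insert_inter_of_notMem hjL, Finset.erase_inter j,
        Finset.erase_eq_of_notMem (fun h => hjL (Finset.mem_inter.1 h).2)]
      exact hij_case1 L hL hiL hb
    · -- j ∈ L, i ∉ L : strict case from j avoiding bad sets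
      have hLL₀ : L ⊆ L₀ := by
        rcases hlam L hL L₀ hL₀𝓛 with h | h | h
        · exact h
        · exact absurd (h hiL₀) hiL
        · exact absurd (Finset.mem_inter.2 ⟨hjL, hjL₀⟩) (by simp [h])
      have ha : (X ∩ L).card < (Y ∩ L).card := hjnotbad j hjB L hL hjL hLL₀ hiL
      have hja : j ∉ X ∩ L := fun h => hjX (Finset.mem_inter.1 h).1
      have hjb : j ∈ Y ∩ L := Finset.mem_inter.2 ⟨hjY, hjL⟩
      rw [Finset.insert_inter_of_mem hjL, Finset.erase_inter i,
        Finset.erase_eq_of_notMem (fun h => hiL (Finset.mem_inter.1 h).2),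
        Finset.erase_inter j, Finset.insert_inter_of_notMem hiL,
        Finset.card_insert_of_notMem hja, Finset.card_erase_of_mem hjb]
      obtain ⟨b, hb⟩ : ∃ b, (Y ∩ L).card = b + 1 := ⟨(Y ∩ L).card - 1, by omega⟩
      rw [hb]
      simp only [Nat.add_sub_cancel]
      have := conc_step (φ L) (hφ L hL) (show (X ∩ L).card ≤ b by omega)
      linarith
    · -- neither
      rw [Finset.insert_inter_of_notMem hjL, Finset.erase_inter i,
        Finset.erase_eq_of_notMem (fun h => hiL (Finset.mem_inter.1 h).2),
        Finset.erase_inter j, Finset.insert_inter_of_notMem hiL,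
        Finset.erase_eq_of_notMem (fun h => hjL (Finset.mem_inter.1 h).2)]
end

section
/- The rank function r(X) = max{|I| : I ⊆ X, I independent} of a matroid is M♮-concave. -/
open Finset

namespace MRankAux

variable {E : Type*} [DecidableEq E] (Indep : Finset E → Prop) [DecidablePred Indep]

def rk (X : Finset E) : ℕ := (X.powerset.filter Indep).sup Finset.card

variable {Indep}

lemma card_le_rk {I X : Finset E} (hIX : I ⊆ X) (hI : Indep I) : I.card ≤ rk Indep X :=
  le_sup (mem_filter.2 ⟨mem_powerset.2 hIX, hI⟩)

lemma rk_mono {X Y : Finset E} (h : X ⊆ Y) : rk Indep X ≤ rk Indep Y :=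
  Finset.sup_mono (Finset.filter_subset_filter _ (Finset.powerset_mono.2 h))

lemma rk_le_card {X : Finset E} : rk Indep X ≤ X.card :=
  Finset.sup_le fun J hJ => Finset.card_le_card (mem_powerset.1 (mem_filter.1 hJ).1)

lemma exists_rk (hempty : Indep ∅) (X : Finset E) :
    ∃ I, I ⊆ X ∧ Indep I ∧ I.card = rk Indep X := by
  have hne : (X.powerset.filter Indep).Nonempty :=
    ⟨∅, mem_filter.2 ⟨mem_powerset.2 (empty_subset X), hempty⟩⟩
  obtain ⟨I, hI, hsup⟩ := Finset.exists_mem_eq_sup _ hne Finset.card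
  exact ⟨I, mem_powerset.1 (mem_filter.1 hI).1, (mem_filter.1 hI).2, hsup.symm⟩

lemma indep_of_card_le_rk (hempty : Indep ∅) {S : Finset E} (h : S.card ≤ rk Indep S) :
    Indep S := by
  obtain ⟨I, hIS, hind, hcard⟩ := exists_rk hempty S
  have : I = S := Finset.eq_of_subset_of_card_le hIS (by omega)
  exact this ▸ hind

lemma rk_eq_of_maximal
    (hexch : ∀ I J : Finset E, Indep I → Indep J → I.card < J.card →
      ∃ i ∈ J \ I, Indep (insert i I))
    {B S : Finset E} (hBS : B ⊆ S) (hB : Indep B)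
    (hmax : ∀ x ∈ S, x ∉ B → ¬Indep (insert x B)) :
    rk Indep S = B.card := by
  refine le_antisymm (Finset.sup_le fun J hJ => ?_) (card_le_rk hBS hB)
  rw [mem_filter, mem_powerset] at hJ
  by_contra hlt
  push_neg at hlt
  obtain ⟨x, hx, hind⟩ := hexch B J hB hJ.2 hlt
  rw [mem_sdiff] at hx
  exact hmax x (hJ.1 hx.1) hx.2 hind

lemma span_lemma
    (hexch : ∀ I J : Finset E, Indep I → Indep J → I.card < J.card →
      ∃ i ∈ J \ I, Indep (insert i I))
    {I S : Finset E} (hI : Indep I)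
    (h : ∀ x ∈ S, x ∉ I → ¬Indep (insert x I)) :
    rk Indep (I ∪ S) = I.card := by
  refine rk_eq_of_maximal hexch subset_union_left hI fun x hx hxI => ?_
  rcases mem_union.1 hx with h' | h'
  · exact absurd h' hxI
  · exact h x h' hxI

lemma exists_maximal {I S : Finset E} (hI : Indep I) (hIS : I ⊆ S) :
    ∃ B, I ⊆ B ∧ B ⊆ S ∧ Indep B ∧ ∀ x ∈ S, x ∉ B → ¬Indep (insert x B) := by
  have hne : (S.powerset.filter (fun J => Indep J ∧ I ⊆ J)).Nonempty :=
    ⟨I, mem_filter.2 ⟨mem_powerset.2 hIS, hI, Subset.rfl⟩⟩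
  obtain ⟨B, hBF, hmax⟩ := Finset.exists_max_image _ Finset.card hne
  rw [mem_filter, mem_powerset] at hBF
  refine ⟨B, hBF.2.2, hBF.1, hBF.2.1, fun x hx hxB hind => ?_⟩
  have hmem : insert x B ∈ S.powerset.filter (fun J => Indep J ∧ I ⊆ J) :=
    mem_filter.2 ⟨mem_powerset.2 (insert_subset hx hBF.1), hind,
      hBF.2.2.trans (subset_insert _ _)⟩
  have := hmax _ hmem
  rw [card_insert_of_notMem hxB] at this
  omega

lemma closure_mono
    (hempty : Indep ∅)
    (hdown : ∀ I J : Finset E, J ⊆ I → Indep I → Indep J)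
    (hexch : ∀ I J : Finset E, Indep I → Indep J → I.card < J.card →
      ∃ i ∈ J \ I, Indep (insert i I))
    {T U : Finset E} {x : E}
    (h : rk Indep (insert x T) = rk Indep T) (hTU : T ⊆ U) :
    rk Indep (insert x U) = rk Indep U := by
  by_cases hxU : x ∈ U
  · rw [insert_eq_self.2 hxU]
  obtain ⟨B0, hB0T, hB0ind, hB0card⟩ := exists_rk hempty T
  obtain ⟨B, hB0B, hBU, hBind, hBmax⟩ := exists_maximal hB0ind (hB0T.trans hTU)
  have hxB : x ∉ B := fun hx => hxU (hBU hx)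
  have key : ∀ y ∈ insert x U, y ∉ B → ¬Indep (insert y B) := by
    intro y hy hyB hind
    rcases mem_insert.1 hy with rfl | hyU
    · have hxB0 : y ∉ B0 := fun hx => hxU (hTU (hB0T hx))
      have hind0 : Indep (insert y B0) :=
        hdown _ _ (insert_subset_insert _ hB0B) hind
      have hsub : insert y B0 ⊆ insert y T := insert_subset_insert _ hB0T
      have := card_le_rk hsub hind0
      rw [card_insert_of_notMem hxB0] at this
      omega
    · exact hBmax y hyU hyB hind
  have e1 : rk Indep (insert x U) = B.card :=
    rk_eq_of_maximal hexch (hBU.trans (subset_insert _ _)) hBind key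
  have e2 : rk Indep U = B.card := rk_eq_of_maximal hexch hBU hBind hBmax
  rw [e1, e2]

lemma main
    (hempty : Indep ∅)
    (hdown : ∀ I J : Finset E, J ⊆ I → Indep I → Indep J)
    (hexch : ∀ I J : Finset E, Indep I → Indep J → I.card < J.card →
      ∃ i ∈ J \ I, Indep (insert i I))
    (X Y : Finset E) (i : E) (hiX : i ∈ X) (hiY : i ∉ Y) :
    rk Indep X + rk Indep Y ≤ rk Indep (X.erase i) + rk Indep (insert i Y) ∨
    ∃ j ∈ Y \ X, rk Indep X + rk Indep Y ≤
      rk Indep (insert j (X.erase i)) + rk Indep ((insert i Y).erase j) := by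
  by_cases h1 : rk Indep X ≤ rk Indep (X.erase i)
  · left
    exact add_le_add h1 (rk_mono (subset_insert _ _))
  push_neg at h1
  obtain ⟨A, hAX, hAind, hAcard⟩ := exists_rk hempty X
  have hiA : i ∈ A := by
    by_contra h
    have hsub : A ⊆ X.erase i := fun x hx =>
      mem_erase.2 ⟨fun e => h (e ▸ hx), hAX hx⟩
    have := card_le_rk hsub hAind
    omega
  have hA' : Indep (A.erase i) := hdown _ _ (erase_subset _ _) hAind
  have hApos : 0 < A.card := card_pos.2 ⟨i, hiA⟩
  have hA'card : (A.erase i).card + 1 = rk Indep X := by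
    rw [card_erase_of_mem hiA]; omega
  have hA'le : (A.erase i).card ≤ rk Indep (X.erase i) :=
    card_le_rk (erase_subset_erase _ hAX) hA'
  by_cases h2 : rk Indep Y < rk Indep (insert i Y)
  · left; omega
  push_neg at h2
  obtain ⟨B, hBY, hBind, hBcard⟩ := exists_rk hempty Y
  have hiB : i ∉ B := fun h => hiY (hBY h)
  have hdepBi : ¬Indep (insert i B) := by
    intro h
    have := card_le_rk (insert_subset_insert i hBY) h
    rw [card_insert_of_notMem hiB] at this
    omega
  -- fundamental circuit C ⊆ insert i B
  have hne : ((insert i B).powerset.filter (fun C => ¬Indep C)).Nonempty :=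
    ⟨insert i B, mem_filter.2 ⟨mem_powerset.2 Subset.rfl, hdepBi⟩⟩
  obtain ⟨C, hCF, hCmin⟩ := Finset.exists_min_image _ Finset.card hne
  rw [mem_filter, mem_powerset] at hCF
  obtain ⟨hCsub, hCdep⟩ := hCF
  have hCmin' : ∀ C' ⊆ insert i B, ¬Indep C' → C.card ≤ C'.card := fun C' h1' h2' =>
    hCmin C' (mem_filter.2 ⟨mem_powerset.2 h1', h2'⟩)
  have hiC : i ∈ C := by
    by_contra h
    have hsub : C ⊆ B := fun x hx => by
      rcases mem_insert.1 (hCsub hx) with rfl | h'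
      · exact absurd hx h
      · exact h'
    exact hCdep (hdown B C hsub hBind)
  have hCind : ∀ j ∈ C, Indep (C.erase j) := by
    intro j hj
    by_contra h
    have h1' := hCmin' _ ((erase_subset _ _).trans hCsub) h
    have h2' := card_erase_of_mem hj
    have : 0 < C.card := card_pos.2 ⟨j, hj⟩
    omega
  have hCpos : 0 < C.card := card_pos.2 ⟨i, hiC⟩
  have hrkC : rk Indep C + 1 = C.card := by
    have h1' : rk Indep C ≤ C.card := rk_le_card
    have h2' : rk Indep C ≠ C.card := fun h =>
      hCdep (indep_of_card_le_rk hempty (le_of_eq h.symm))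
    have h3' : (C.erase i).card ≤ rk Indep C := card_le_rk (erase_subset _ _) (hCind i hiC)
    have h4' := card_erase_of_mem hiC
    omega
  have hclC : ∀ j ∈ C, rk Indep (insert j (C.erase j)) = rk Indep (C.erase j) := by
    intro j hj
    rw [insert_erase hj]
    have e1 : rk Indep (C.erase j) = (C.erase j).card :=
      le_antisymm rk_le_card (card_le_rk Subset.rfl (hCind j hj))
    have e2 := card_erase_of_mem hj
    omega
  by_cases hex : ∃ j ∈ C.erase i, j ∉ A.erase i ∧ Indep (insert j (A.erase i))
  · obtain ⟨j, hjC, hjA, hjind⟩ := hex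
    have hji : j ≠ i := (mem_erase.1 hjC).1
    have hjB : j ∈ B := by
      rcases mem_insert.1 (hCsub (mem_of_mem_erase hjC)) with rfl | h'
      · exact absurd rfl hji
      · exact h'
    have hjY : j ∈ Y := hBY hjB
    by_cases hjX : j ∈ X
    · left
      have hsub : insert j (A.erase i) ⊆ X.erase i :=
        insert_subset (mem_erase.2 ⟨hji, hjX⟩) (erase_subset_erase _ hAX)
      have := card_le_rk hsub hjind
      rw [card_insert_of_notMem hjA] at this
      omega
    · right
      refine ⟨j, mem_sdiff.2 ⟨hjY, hjX⟩, ?_⟩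
      have e1 : rk Indep X ≤ rk Indep (insert j (X.erase i)) := by
        have hsub : insert j (A.erase i) ⊆ insert j (X.erase i) :=
          insert_subset_insert _ (erase_subset_erase _ hAX)
        have := card_le_rk hsub hjind
        rw [card_insert_of_notMem hjA] at this
        omega
      have e2 : rk Indep Y ≤ rk Indep ((insert i Y).erase j) := by
        have hTsub : C.erase j ⊆ (insert i B).erase j := erase_subset_erase _ hCsub
        have hcl := closure_mono hempty hdown hexch
          (hclC j (mem_of_mem_erase hjC)) hTsub
        rw [insert_erase (mem_insert_of_mem hjB)] at hcl
        have hBle : B.card ≤ rk Indep (insert i B) := card_le_rk (subset_insert _ _) hBind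
        have hc : ((insert i B).erase j).card = B.card := by
          rw [card_erase_of_mem (mem_insert_of_mem hjB), card_insert_of_notMem hiB]
          omega
        have hDind : Indep ((insert i B).erase j) :=
          indep_of_card_le_rk hempty (by omega)
        have hDsub : (insert i B).erase j ⊆ (insert i Y).erase j :=
          erase_subset_erase _ (insert_subset_insert _ hBY)
        have := card_le_rk hDsub hDind
        omega
      omega
  · exfalso
    push_neg at hex
    have hspan : rk Indep (A.erase i ∪ C.erase i) = (A.erase i).card :=
      span_lemma hexch hA' hex
    have hclU : rk Indep (insert i (A.erase i ∪ C.erase i)) =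
        rk Indep (A.erase i ∪ C.erase i) :=
      closure_mono hempty hdown hexch
        ((insert_erase hiC) ▸ hclC i hiC) subset_union_right
    have hAsub : A ⊆ insert i (A.erase i ∪ C.erase i) := by
      intro x hx
      rcases eq_or_ne x i with rfl | hxi
      · exact mem_insert_self _ _
      · exact mem_insert_of_mem (mem_union_left _ (mem_erase.2 ⟨hxi, hx⟩))
    have := card_le_rk hAsub hAind
    omega

end MRankAux

theorem matroid_rank_mconcave {E : Type*} [DecidableEq E]
    (Indep : Finset E → Prop) [DecidablePred Indep]
    (hempty : Indep ∅)
    (hdown : ∀ I J : Finset E, J ⊆ I → Indep I → Indep J)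
    (hexch : ∀ I J : Finset E, Indep I → Indep J → I.card < J.card →
      ∃ i ∈ J \ I, Indep (insert i I)) :
    MConcave (fun X : Finset E =>
      (((X.powerset.filter Indep).sup Finset.card : ℕ) : ℝ)) := by
  intro X Y i hi
  rw [mem_sdiff] at hi
  rcases MRankAux.main hempty hdown hexch X Y i hi.1 hi.2 with h | ⟨j, hj, h⟩
  · left
    have h' : ((MRankAux.rk Indep X : ℝ)) + MRankAux.rk Indep Y ≤
        MRankAux.rk Indep (X.erase i) + MRankAux.rk Indep (insert i Y) := by exact_mod_cast h
    exact h'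
  · right
    have h' : ((MRankAux.rk Indep X : ℝ)) + MRankAux.rk Indep Y ≤
        MRankAux.rk Indep (insert j (X.erase i)) + MRankAux.rk Indep ((insert i Y).erase j) := by
      exact_mod_cast h
    exact ⟨j, hj, h'⟩
end

section
/- The weighted matroid rank function f(X) = max{Σ_{e∈I} w(e) : I ⊆ X, I independent}, for a nonnegative weight vector w, is M♮-concave. -/
open Finset

section Helpers

variable {E : Type*} [DecidableEq E] {Indep : Finset E → Prop}

private lemma extendAux (S : Finset E) :
    ∀ n (I : Finset E), S.card - I.card ≤ n → I ⊆ S → Indep I →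
    ∃ M, I ⊆ M ∧ M ⊆ S ∧ Indep M ∧ ∀ j ∈ S, j ∉ M → ¬ Indep (insert j M) := by
  intro n
  induction n with
  | zero =>
    intro I hn hIS hI
    have hc : S.card ≤ I.card := by omega
    have : I = S := Finset.eq_of_subset_of_card_le hIS hc
    subst this
    exact ⟨I, Finset.Subset.rfl, Finset.Subset.rfl, hI, fun j hj hj' => absurd hj hj'⟩
  | succ n ih =>
    intro I hn hIS hI
    by_cases h : ∀ j ∈ S, j ∉ I → ¬ Indep (insert j I)
    · exact ⟨I, Finset.Subset.rfl, hIS, hI, h⟩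
    · push_neg at h
      obtain ⟨j, hjS, hjI, hind⟩ := h
      have hIcard : I.card < S.card := by
        have := Finset.card_lt_card (Finset.ssubset_iff_of_subset hIS |>.mpr ⟨j, hjS, hjI⟩)
        exact this
      have hcard : S.card - (insert j I).card ≤ n := by
        rw [Finset.card_insert_of_notMem hjI]
        omega
      obtain ⟨M, h1, h2, h3, h4⟩ := ih (insert j I) hcard (Finset.insert_subset hjS hIS) hind
      exact ⟨M, (Finset.subset_insert j I).trans h1, h2, h3, h4⟩

private lemma extendMax {S I : Finset E} (hIS : I ⊆ S) (hI : Indep I) :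
    ∃ M, I ⊆ M ∧ M ⊆ S ∧ Indep M ∧ ∀ j ∈ S, j ∉ M → ¬ Indep (insert j M) :=
  extendAux S S.card I (by omega) hIS hI

private lemma maxCard
    (hexch : ∀ I J : Finset E, Indep I → Indep J → I.card < J.card →
      ∃ i ∈ J \ I, Indep (insert i I))
    {S M J : Finset E} (hM : Indep M)
    (hMmax : ∀ j ∈ S, j ∉ M → ¬ Indep (insert j M))
    (hJS : J ⊆ S) (hJ : Indep J) : J.card ≤ M.card := by
  by_contra h
  push_neg at h
  obtain ⟨x, hx, hxi⟩ := hexch M J hM hJ h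
  rw [Finset.mem_sdiff] at hx
  exact hMmax x (hJS hx.1) hx.2 hxi

private lemma exists_circuit [DecidablePred Indep] {D : Finset E} (hD : ¬ Indep D) :
    ∃ C ⊆ D, ¬ Indep C ∧ ∀ x ∈ C, Indep (C.erase x) := by
  obtain ⟨C, hC, hmin⟩ := Finset.exists_min_image
    (D.powerset.filter fun C => ¬ Indep C) Finset.card
    ⟨D, by simp [hD]⟩
  simp only [Finset.mem_filter, Finset.mem_powerset] at hC
  refine ⟨C, hC.1, hC.2, fun x hx => ?_⟩
  by_contra hdep
  have hmem : C.erase x ∈ D.powerset.filter fun C => ¬ Indep C := by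
    simp only [Finset.mem_filter, Finset.mem_powerset]
    exact ⟨(Finset.erase_subset x C).trans hC.1, hdep⟩
  have := hmin (C.erase x) hmem
  have hlt := Finset.card_erase_lt_of_mem hx
  omega

private lemma key [DecidablePred Indep]
    (hdown : ∀ I J : Finset E, J ⊆ I → Indep I → Indep J)
    (hexch : ∀ I J : Finset E, Indep I → Indep J → I.card < J.card →
      ∃ i ∈ J \ I, Indep (insert i I))
    {A B : Finset E} (hA : Indep A) (hB : Indep B) {i : E} (hiA : i ∈ A) (hiB : i ∉ B)
    (hdep : ¬ Indep (insert i B)) :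
    ∃ j ∈ B, j ∉ A ∧ Indep (insert j (A.erase i)) ∧ Indep (insert i (B.erase j)) := by
  obtain ⟨C, hCsub, hCdep, hCmin⟩ := exists_circuit hdep
  have hiC : i ∈ C := by
    by_contra h
    refine hCdep (hdown B C (fun x hx => ?_) hB)
    rcases Finset.mem_insert.mp (hCsub hx) with rfl | hxB
    · exact absurd hx h
    · exact hxB
  have hA'indep : Indep (A.erase i) := hdown A (A.erase i) (Finset.erase_subset i A) hA
  -- Step 1 : find j ∈ C.erase i with j ∉ A.erase i and insert j (A.erase i) independent
  have hstep : ∃ j ∈ C.erase i, j ∉ A.erase i ∧ Indep (insert j (A.erase i)) := by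
    by_contra h
    push_neg at h
    have hmax : ∀ x ∈ A.erase i ∪ C.erase i, x ∉ A.erase i → ¬ Indep (insert x (A.erase i)) := by
      intro x hx hxA'
      rcases Finset.mem_union.mp hx with h1 | h1
      · exact absurd h1 hxA'
      · exact h x h1 hxA'
    obtain ⟨N, hN1, hN2, hN3, hN4⟩ :=
      extendMax (I := C.erase i) (S := A.erase i ∪ C.erase i)
        Finset.subset_union_right (hCmin i hiC)
    have hNcard : N.card ≤ (A.erase i).card := maxCard hexch hA'indep hmax hN2 hN3
    have hAcard : (A.erase i).card < A.card := Finset.card_erase_lt_of_mem hiA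
    obtain ⟨x, hx, hxind⟩ := hexch N A hN3 hA (by omega)
    rw [Finset.mem_sdiff] at hx
    rcases eq_or_ne x i with rfl | hxi
    · have hsub : C ⊆ insert x N := by
        intro c hc
        rcases eq_or_ne c x with rfl | hcx
        · exact Finset.mem_insert_self _ _
        · exact Finset.mem_insert_of_mem (hN1 (Finset.mem_erase.mpr ⟨hcx, hc⟩))
      exact hCdep (hdown _ C hsub hxind)
    · have hxA' : x ∈ A.erase i := Finset.mem_erase.mpr ⟨hxi, hx.1⟩
      exact hN4 x (Finset.mem_union_left _ hxA') hx.2 hxind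
  obtain ⟨j, hjC, hjA', hjind⟩ := hstep
  have hji : j ≠ i := (Finset.mem_erase.mp hjC).1
  have hjB : j ∈ B := by
    rcases Finset.mem_insert.mp (hCsub (Finset.mem_erase.mp hjC).2) with h | h
    · exact absurd h hji
    · exact h
  have hjA : j ∉ A := fun h => hjA' (Finset.mem_erase.mpr ⟨hji, h⟩)
  -- Step 2 : insert i (B.erase j) is independent
  have hBmax : ∀ x ∈ insert i B, x ∉ B → ¬ Indep (insert x B) := by
    intro x hx hxB
    rcases Finset.mem_insert.mp hx with rfl | h
    · exact hdep
    · exact absurd h hxB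
  have hCj : Indep (C.erase j) := hCmin j (Finset.mem_erase.mp hjC).2
  obtain ⟨M, hM1, hM2, hM3, hM4⟩ :=
    extendMax ((Finset.erase_subset j C).trans hCsub) hCj
  have hMB : M.card ≤ B.card := maxCard hexch hB hBmax hM2 hM3
  have hBM : B.card ≤ M.card := maxCard hexch hM3 hM4 (Finset.subset_insert i B) hB
  have hiM : i ∈ M := hM1 (Finset.mem_erase.mpr ⟨hji.symm, hiC⟩)
  have hins : (insert i B).card = B.card + 1 := Finset.card_insert_of_notMem hiB
  have hsd : ((insert i B) \ M).card = 1 := by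
    rw [Finset.card_sdiff_of_subset hM2]
    omega
  obtain ⟨k, hk⟩ := Finset.card_eq_one.mp hsd
  have hkmem : k ∈ (insert i B) \ M := hk ▸ Finset.mem_singleton_self k
  rw [Finset.mem_sdiff] at hkmem
  have hkj : k = j := by
    by_contra hkj
    have hjM : j ∈ M := by
      by_contra hjM
      have : j ∈ (insert i B) \ M :=
        Finset.mem_sdiff.mpr ⟨Finset.mem_insert_of_mem hjB, hjM⟩
      rw [hk] at this
      exact hkj (Finset.mem_singleton.mp this).symm
    have hCM : C ⊆ M := by
      intro c hc
      rcases eq_or_ne c j with rfl | hcj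
      · exact hjM
      · exact hM1 (Finset.mem_erase.mpr ⟨hcj, hc⟩)
    exact hCdep (hdown M C hCM hM3)
  subst hkj
  have hMeq : M = insert i (B.erase k) := by
    ext x
    constructor
    · intro hx
      have hxiB := hM2 hx
      have hxk : x ≠ k := fun hxe => hkmem.2 (hxe ▸ hx)
      rcases Finset.mem_insert.mp hxiB with rfl | h
      · exact Finset.mem_insert_self _ _
      · exact Finset.mem_insert_of_mem (Finset.mem_erase.mpr ⟨hxk, h⟩)
    · intro hx
      rcases Finset.mem_insert.mp hx with rfl | h
      · exact hiM
      · have hxB := (Finset.mem_erase.mp h).2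
        have hxk := (Finset.mem_erase.mp h).1
        by_contra hxM
        have : x ∈ (insert i B) \ M :=
          Finset.mem_sdiff.mpr ⟨Finset.mem_insert_of_mem hxB, hxM⟩
        rw [hk] at this
        exact hxk (Finset.mem_singleton.mp this)
  exact ⟨k, hjB, hjA, hjind, hMeq ▸ hM3⟩

end Helpers

theorem weighted_matroid_rank_mconcave {E : Type*} [DecidableEq E]
    (Indep : Finset E → Prop) [DecidablePred Indep]
    (hempty : Indep ∅)
    (hdown : ∀ I J : Finset E, J ⊆ I → Indep I → Indep J)
    (hexch : ∀ I J : Finset E, Indep I → Indep J → I.card < J.card →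
      ∃ i ∈ J \ I, Indep (insert i I))
    (w : E → ℝ) (hw : ∀ e, 0 ≤ w e) :
    MConcave (fun X : Finset E =>
      (X.powerset.filter Indep).sup'
        ⟨∅, Finset.mem_filter.mpr ⟨Finset.mem_powerset.mpr (Finset.empty_subset X), hempty⟩⟩
        (fun I => ∑ e ∈ I, w e)) := by
  have ne : ∀ Z : Finset E, (Z.powerset.filter Indep).Nonempty := fun Z =>
    ⟨∅, Finset.mem_filter.mpr ⟨Finset.mem_powerset.mpr (Finset.empty_subset Z), hempty⟩⟩
  set f : Finset E → ℝ := fun Z =>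
    (Z.powerset.filter Indep).sup' (ne Z) (fun I => ∑ e ∈ I, w e) with hf
  have hle : ∀ (Z I : Finset E), I ⊆ Z → Indep I → ∑ e ∈ I, w e ≤ f Z := by
    intro Z I hI h
    exact Finset.le_sup' (fun I => ∑ e ∈ I, w e) (Finset.mem_filter.mpr ⟨Finset.mem_powerset.mpr hI, h⟩)
  have hopt : ∀ Z : Finset E, ∃ A, A ⊆ Z ∧ Indep A ∧ f Z = ∑ e ∈ A, w e := by
    intro Z
    obtain ⟨A, hA, hAeq⟩ := Finset.exists_mem_eq_sup' (ne Z) (fun I => ∑ e ∈ I, w e)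
    simp only [Finset.mem_filter, Finset.mem_powerset] at hA
    exact ⟨A, hA.1, hA.2, hAeq⟩
  intro X Y i hi
  rw [Finset.mem_sdiff] at hi
  obtain ⟨hiX, hiY⟩ := hi
  obtain ⟨A, hAX, hAind, hAeq⟩ := hopt X
  obtain ⟨B, hBY, hBind, hBeq⟩ := hopt Y
  have hiB : i ∉ B := fun h => hiY (hBY h)
  by_cases hiA : i ∈ A
  · have hA' : Indep (A.erase i) := hdown A _ (Finset.erase_subset i A) hAind
    have hA'sub : A.erase i ⊆ X.erase i := Finset.erase_subset_erase i hAX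
    have hsumA' : ∑ e ∈ A.erase i, w e = (∑ e ∈ A, w e) - w i :=
      Finset.sum_erase_eq_sub hiA
    by_cases hBi : Indep (insert i B)
    · left
      have h1 : (∑ e ∈ A, w e) - w i ≤ f (X.erase i) := hsumA' ▸ hle _ _ hA'sub hA'
      have h2 : w i + ∑ e ∈ B, w e ≤ f (insert i Y) := by
        have hsub : insert i B ⊆ insert i Y := Finset.insert_subset_insert i hBY
        have := hle _ _ hsub hBi
        rwa [Finset.sum_insert hiB] at this
      rw [hAeq, hBeq]
      linarith
    · obtain ⟨j, hjB, hjA, hj1, hj2⟩ := key hdown hexch hAind hBind hiA hiB hBi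
      have hji : j ≠ i := fun h => hiY (h ▸ hBY hjB)
      have hjY : j ∈ Y := hBY hjB
      have hjA' : j ∉ A.erase i := fun h => hjA (Finset.mem_of_mem_erase h)
      have hij : i ∉ B.erase j := fun h => hiB (Finset.mem_of_mem_erase h)
      have hsum1 : ∑ e ∈ insert j (A.erase i), w e = w j + ((∑ e ∈ A, w e) - w i) := by
        rw [Finset.sum_insert hjA', hsumA']
      have hsum2 : ∑ e ∈ insert i (B.erase j), w e = w i + ((∑ e ∈ B, w e) - w j) := by
        rw [Finset.sum_insert hij, Finset.sum_erase_eq_sub hjB]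
      by_cases hjX : j ∈ X
      · left
        have hsub1 : insert j (A.erase i) ⊆ X.erase i :=
          Finset.insert_subset (Finset.mem_erase.mpr ⟨hji, hjX⟩) hA'sub
        have hsub2 : insert i (B.erase j) ⊆ insert i Y :=
          Finset.insert_subset (Finset.mem_insert_self i Y)
            (((Finset.erase_subset j B).trans hBY).trans (Finset.subset_insert i Y))
        have h1 := hle _ _ hsub1 hj1
        have h2 := hle _ _ hsub2 hj2
        rw [hsum1] at h1
        rw [hsum2] at h2
        rw [hAeq, hBeq]
        linarith
      · right
        refine ⟨j, Finset.mem_sdiff.mpr ⟨hjY, hjX⟩, ?_⟩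
        have hsub1 : insert j (A.erase i) ⊆ insert j (X.erase i) :=
          Finset.insert_subset_insert j hA'sub
        have hsub2 : insert i (B.erase j) ⊆ (insert i Y).erase j := by
          intro x hx
          rcases Finset.mem_insert.mp hx with rfl | h
          · exact Finset.mem_erase.mpr ⟨hji.symm, Finset.mem_insert_self _ _⟩
          · exact Finset.mem_erase.mpr ⟨(Finset.mem_erase.mp h).1,
              Finset.mem_insert_of_mem (hBY (Finset.mem_of_mem_erase h))⟩
        have h1 := hle _ _ hsub1 hj1
        have h2 := hle _ _ hsub2 hj2
        rw [hsum1] at h1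
        rw [hsum2] at h2
        rw [hAeq, hBeq]
        linarith
  · left
    have h1 : f X ≤ f (X.erase i) := by
      rw [hAeq]
      exact hle _ _ (Finset.subset_erase.mpr ⟨hAX, hiA⟩) hAind
    have h2 : f Y ≤ f (insert i Y) := by
      rw [hBeq]
      exact hle _ _ (hBY.trans (Finset.subset_insert i Y)) hBind
    linarith
end

section
/- Let A ∈ ℝ^{E×E} be a symmetric matrix of the form A = Σ_{L∈L} λ_L 1_L 1_L^T + Diag(d) for a laminar family L, coefficients λ_L ≤ 0, and d ∈ ℝ^E. Then A_{ij} ≤ 0 for all distinct i,j, and A_{ij} ≤ max{A_{ik}, A_{jk}} for all distinct i,j,k. -/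
open Finset

theorem laminar_form_ultrametric {E : Type*} [DecidableEq E] [Fintype E]
    (𝓛 : Finset (Finset E)) (hlam : Laminar 𝓛)
    (lam : Finset E → ℝ) (hneg : ∀ L ∈ 𝓛, lam L ≤ 0) (d : E → ℝ)
    (A : E → E → ℝ)
    (hA : ∀ i j : E, A i j =
      (∑ L ∈ 𝓛, lam L * (if i ∈ L then 1 else 0) * (if j ∈ L then 1 else 0)) +
      (if i = j then d i else 0)) :
    (∀ i j : E, i ≠ j → A i j ≤ 0) ∧
    (∀ i j k : E, i ≠ j → j ≠ k → i ≠ k → A i j ≤ max (A i k) (A j k)) := by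
  classical
  set S : E → E → Finset (Finset E) :=
    fun i j => 𝓛.filter (fun L => i ∈ L ∧ j ∈ L) with hS
  have key : ∀ i j : E, i ≠ j → A i j = ∑ L ∈ S i j, lam L := by
    intro i j hij
    rw [hA i j, if_neg hij, add_zero, hS]
    rw [Finset.sum_filter]
    apply Finset.sum_congr rfl
    intro L _
    by_cases hi : i ∈ L <;> by_cases hj : j ∈ L <;> simp [hi, hj]
  have hsumneg : ∀ i j : E, ∑ L ∈ S i j, lam L ≤ 0 := by
    intro i j
    apply Finset.sum_nonpos
    intro L hL
    exact hneg L (Finset.mem_filter.mp hL).1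
  have hmono : ∀ i j i' j' : E, S i' j' ⊆ S i j →
      ∑ L ∈ S i j, lam L ≤ ∑ L ∈ S i' j', lam L := by
    intro i j i' j' hsub
    have := Finset.sum_le_sum_of_subset_of_nonneg (f := fun L => -lam L) hsub
      (fun L hL _ => neg_nonneg.mpr (hneg L (Finset.mem_filter.mp hL).1))
    simp only [Finset.sum_neg_distrib] at this
    linarith
  constructor
  · intro i j hij
    rw [key i j hij]
    exact hsumneg i j
  · intro i j k hij hjk hik
    have hsub : S i k ⊆ S i j ∨ S j k ⊆ S i j := by
      by_contra h
      push_neg at h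
      obtain ⟨h1, h2⟩ := h
      obtain ⟨L, hL, hLn⟩ := Finset.not_subset.mp h1
      obtain ⟨M, hM, hMn⟩ := Finset.not_subset.mp h2
      rw [hS] at hL hM hLn hMn
      simp only [Finset.mem_filter] at hL hM
      obtain ⟨hL𝓛, hiL, hkL⟩ := hL
      obtain ⟨hM𝓛, hjM, hkM⟩ := hM
      have hjL : j ∉ L := fun hj => hLn (Finset.mem_filter.mpr ⟨hL𝓛, hiL, hj⟩)
      have hiM : i ∉ M := fun hi => hMn (Finset.mem_filter.mpr ⟨hM𝓛, hi, hjM⟩)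
      rcases hlam L hL𝓛 M hM𝓛 with h | h | h
      · exact hiM (h hiL)
      · exact hjL (h hjM)
      · have : k ∈ L ∩ M := Finset.mem_inter.mpr ⟨hkL, hkM⟩
        rw [h] at this
        exact absurd this (Finset.notMem_empty k)
    rw [key i j hij, key i k hik, key j k hjk]
    rcases hsub with h | h
    · exact le_max_of_le_left (hmono i j i k h)
    · exact le_max_of_le_right (hmono i j j k h)
end

section
/- Let A ∈ ℝ^{E×E} be symmetric with A_{ij} ≤ 0 for distinct i,j and A_{ij} ≤ max{A_{ik}, A_{jk}} for distinct i,j,k. Then there exist a laminar family L on E, coefficients λ_L ≤ 0 (L ∈ L), and d ∈ ℝ^E such that A = Σ_{L∈L} λ_L 1_L 1_L^T + Diag(d). -/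
open Finset

/-- Weight for the telescoping decomposition: `t` minus the next larger value of `T`,
or `t` itself if `t` is the maximum. -/
noncomputable def uw (T : Finset ℝ) (t : ℝ) : ℝ :=
  if h : (T.filter fun s => t < s).Nonempty then t - (T.filter fun s => t < s).min' h else t

lemma uw_nonpos {T : Finset ℝ} {t : ℝ} (ht : t ≤ 0) : uw T t ≤ 0 := by
  unfold uw
  split_ifs with h
  · have h1 := (T.filter fun s => t < s).min'_mem h
    have h2 : t < (T.filter fun s => t < s).min' h := (Finset.mem_filter.1 h1).2
    linarith
  · exact ht

lemma uw_key (T : Finset ℝ) : ∀ v ∈ T, (∑ t ∈ T, if v ≤ t then uw T t else 0) = v := by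
  induction T using Finset.strongInduction with
  | _ T ih =>
  intro v hv
  have hne : T.Nonempty := ⟨v, hv⟩
  set M := T.max' hne with hM
  have hMmem : M ∈ T := T.max'_mem hne
  have hWM : uw T M = M := by
    unfold uw
    rw [dif_neg]
    simp only [Finset.not_nonempty_iff_eq_empty, Finset.filter_eq_empty_iff]
    intro s hs
    exact not_lt.2 (T.le_max' s hs)
  rw [← Finset.add_sum_erase _ _ hMmem, if_pos (T.le_max' v hv), hWM]
  by_cases hvM : v = M
  · have hz : ∀ t ∈ T.erase M, (if v ≤ t then uw T t else 0) = 0 := by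
      intro t ht
      rw [if_neg]
      have h1 := Finset.mem_of_mem_erase ht
      have h2 := Finset.ne_of_mem_erase ht
      have h3 : t < M := lt_of_le_of_ne (T.le_max' t h1) h2
      rw [hvM]; exact not_le.2 h3
    rw [Finset.sum_congr rfl hz, Finset.sum_const_zero, add_zero, hvM]
  · set T' := T.erase M with hT'
    have hss : T' ⊂ T := Finset.erase_ssubset hMmem
    have hvT' : v ∈ T' := Finset.mem_erase.2 ⟨hvM, hv⟩
    have hT'ne : T'.Nonempty := ⟨v, hvT'⟩
    set m' := T'.max' hT'ne with hm'
    have hm'mem : m' ∈ T' := T'.max'_mem hT'ne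
    have hm'T : m' ∈ T := Finset.mem_of_mem_erase hm'mem
    have hm'M : m' < M := lt_of_le_of_ne (T.le_max' _ hm'T) (Finset.ne_of_mem_erase hm'mem)
    have hpt : ∀ t ∈ T', uw T t = uw T' t - (if t = m' then M else 0) := by
      intro t ht
      by_cases htm : t = m'
      · have hfe : (T'.filter fun s => t < s) = ∅ := by
          rw [Finset.filter_eq_empty_iff]
          intro s hs
          rw [htm]
          exact not_lt.2 (T'.le_max' s hs)
        have hfT : (T.filter fun s => t < s) = {M} := by
          ext s
          simp only [Finset.mem_filter, Finset.mem_singleton]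
          constructor
          · rintro ⟨hsT, hts⟩
            by_contra hsM
            have hmem : s ∈ T'.filter fun s => t < s :=
              Finset.mem_filter.2 ⟨Finset.mem_erase.2 ⟨hsM, hsT⟩, hts⟩
            rw [hfe] at hmem
            exact absurd hmem (Finset.notMem_empty s)
          · rintro rfl
            exact ⟨hMmem, lt_of_le_of_lt (le_of_eq htm) hm'M⟩
        unfold uw
        rw [hfT, hfe, dif_pos (by simp), dif_neg (by simp)]
        simp [htm]
      · have htm' : t < m' :=
          lt_of_le_of_ne (T'.le_max' t ht) htm
        have hfne : (T'.filter fun s => t < s).Nonempty :=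
          ⟨m', Finset.mem_filter.2 ⟨hm'mem, htm'⟩⟩
        have hfT : (T.filter fun s => t < s) = insert M (T'.filter fun s => t < s) := by
          ext s
          simp only [Finset.mem_filter, Finset.mem_insert, hT', Finset.mem_erase]
          constructor
          · rintro ⟨hsT, hts⟩
            by_cases hsM : s = M
            · exact Or.inl hsM
            · exact Or.inr ⟨⟨hsM, hsT⟩, hts⟩
          · rintro (rfl | ⟨⟨_, hsT⟩, hts⟩)
            · exact ⟨hMmem, lt_trans htm' hm'M⟩
            · exact ⟨hsT, hts⟩
        have hmin : (T.filter fun s => t < s).min' (by rw [hfT]; exact ⟨M, Finset.mem_insert_self _ _⟩)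
            = (T'.filter fun s => t < s).min' hfne := by
          have hle : (T'.filter fun s => t < s).min' hfne ≤ M := by
            have h1 : (T'.filter fun s => t < s).min' hfne ∈ (T'.filter fun s => t < s) :=
              Finset.min'_mem _ _
            have h2 : (T'.filter fun s => t < s).min' hfne ∈ T' := (Finset.mem_filter.1 h1).1
            have h3 : (T'.filter fun s => t < s).min' hfne ≤ m' := T'.le_max' _ h2
            linarith
          apply le_antisymm
          · apply Finset.min'_le
            rw [hfT]
            exact Finset.mem_insert_of_mem (Finset.min'_mem _ _)
          · apply Finset.le_min'
            intro y hy
            rw [hfT, Finset.mem_insert] at hy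
            rcases hy with rfl | hy
            · exact hle
            · exact Finset.min'_le _ _ hy
        unfold uw
        rw [dif_pos, dif_pos hfne, if_neg htm, hmin]
        ring
        rw [hfT]; exact ⟨M, Finset.mem_insert_self _ _⟩
    have hsplit : (∑ t ∈ T', if v ≤ t then uw T t else 0)
        = (∑ t ∈ T', if v ≤ t then uw T' t else 0)
          - ∑ t ∈ T', if v ≤ t then (if t = m' then M else 0) else 0 := by
      rw [← Finset.sum_sub_distrib]
      apply Finset.sum_congr rfl
      intro t ht
      rw [hpt t ht]
      split_ifs <;> ring
    have hsecond : (∑ t ∈ T', if v ≤ t then (if t = m' then M else 0) else 0) = M := by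
      have hc : ∀ t ∈ T', (if v ≤ t then (if t = m' then M else 0) else 0)
          = (if t = m' then (if v ≤ t then M else 0) else 0) := by
        intro t _
        split_ifs <;> rfl
      rw [Finset.sum_congr rfl hc, Finset.sum_ite_eq' T' m' (fun t => if v ≤ t then M else 0),
        if_pos hm'mem, if_pos (T'.le_max' v hvT')]
    rw [hsplit, ih T' hss v hvT', hsecond]
    ring

section Cls

variable {E : Type*} [DecidableEq E] [Fintype E]

/-- The "ball" of radius `t` around `i`. -/
noncomputable def cls (A : E → E → ℝ) (t : ℝ) (i : E) : Finset E :=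
  univ.filter fun j => i = j ∨ A i j ≤ t

lemma mem_cls {A : E → E → ℝ} {t : ℝ} {i j : E} :
    j ∈ cls A t i ↔ (i = j ∨ A i j ≤ t) := by
  simp [cls]

lemma self_mem_cls (A : E → E → ℝ) (t : ℝ) (i : E) : i ∈ cls A t i := by
  simp [cls]

variable {A : E → E → ℝ} (hsymm : ∀ i j : E, A i j = A j i)
  (hum : ∀ i j k : E, i ≠ j → j ≠ k → i ≠ k → A i j ≤ max (A i k) (A j k))

include hsymm in
lemma cls_mem_symm {t : ℝ} {i j : E} (h : j ∈ cls A t i) : i ∈ cls A t j := by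
  rw [mem_cls] at h ⊢
  rcases h with rfl | h
  · exact Or.inl rfl
  · exact Or.inr (by rw [hsymm]; exact h)

include hsymm hum in
lemma cls_subset {t : ℝ} {i j : E} (h : j ∈ cls A t i) : cls A t j ⊆ cls A t i := by
  intro y hy
  rw [mem_cls] at h hy ⊢
  by_cases hiy : i = y
  · exact Or.inl hiy
  · right
    by_cases hjy : j = y
    · rcases h with rfl | hij
      · exact absurd hjy hiy
      · rw [← hjy]; exact hij
    · have hAjy : A j y ≤ t := by
        rcases hy with heq | h2
        · exact absurd heq hjy
        · exact h2
      rcases h with rfl | hij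
      · exact hAjy
      · by_cases hijn : i = j
        · rw [hijn]; exact hAjy
        · have h1 : A i y ≤ max (A i j) (A y j) := hum i y j hiy (fun hh => hjy hh.symm) hijn
          rw [hsymm y j] at h1
          exact le_trans h1 (max_le hij hAjy)

include hsymm hum in
lemma cls_eq_of_mem {t : ℝ} {i j : E} (h : j ∈ cls A t i) : cls A t j = cls A t i :=
  subset_antisymm (cls_subset hsymm hum h) (cls_subset hsymm hum (cls_mem_symm hsymm h))

lemma cls_mono {t s : ℝ} (hts : t ≤ s) (i : E) : cls A t i ⊆ cls A s i := by
  intro y hy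
  rw [mem_cls] at hy ⊢
  rcases hy with rfl | hy
  · exact Or.inl rfl
  · exact Or.inr (le_trans hy hts)

include hsymm hum in
lemma cls_laminar (t s : ℝ) (i j : E) :
    cls A t i ⊆ cls A s j ∨ cls A s j ⊆ cls A t i ∨ cls A t i ∩ cls A s j = ∅ := by
  by_cases h : (cls A t i ∩ cls A s j).Nonempty
  · obtain ⟨x, hx⟩ := h
    rw [Finset.mem_inter] at hx
    rcases le_total t s with hts | hst
    · left
      calc cls A t i = cls A t x := (cls_eq_of_mem hsymm hum hx.1).symm
        _ ⊆ cls A s x := cls_mono hts x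
        _ = cls A s j := cls_eq_of_mem hsymm hum hx.2
    · right; left
      calc cls A s j = cls A s x := (cls_eq_of_mem hsymm hum hx.2).symm
        _ ⊆ cls A t x := cls_mono hst x
        _ = cls A t i := cls_eq_of_mem hsymm hum hx.1
  · exact Or.inr (Or.inr (Finset.not_nonempty_iff_eq_empty.1 h))

end Cls

theorem ultrametric_laminar_form {E : Type*} [DecidableEq E] [Fintype E]
    (A : E → E → ℝ) (hsymm : ∀ i j : E, A i j = A j i)
    (hnp : ∀ i j : E, i ≠ j → A i j ≤ 0)
    (hum : ∀ i j k : E, i ≠ j → j ≠ k → i ≠ k → A i j ≤ max (A i k) (A j k)) :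
    ∃ (𝓛 : Finset (Finset E)) (lam : Finset E → ℝ) (d : E → ℝ),
      Laminar 𝓛 ∧ (∀ L ∈ 𝓛, lam L ≤ 0) ∧
      ∀ i j : E, A i j =
        (∑ L ∈ 𝓛, lam L * (if i ∈ L then 1 else 0) * (if j ∈ L then 1 else 0)) +
        (if i = j then d i else 0) := by
  classical
  set T : Finset ℝ := univ.offDiag.image fun p : E × E => A p.1 p.2 with hT
  set 𝓛 : Finset (Finset E) := (T ×ˢ (univ : Finset E)).image fun p => cls A p.1 p.2 with h𝓛
  set lam : Finset E → ℝ := fun L => ∑ t ∈ T, if (∃ k, cls A t k = L) then uw T t else 0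
    with hlam
  have hTnp : ∀ t ∈ T, t ≤ 0 := by
    intro t ht
    rw [hT, Finset.mem_image] at ht
    obtain ⟨p, hp, rfl⟩ := ht
    rw [Finset.mem_offDiag] at hp
    exact hnp p.1 p.2 hp.2.2
  have hclsmem : ∀ t ∈ T, ∀ i : E, cls A t i ∈ 𝓛 := by
    intro t ht i
    rw [h𝓛, Finset.mem_image]
    exact ⟨(t, i), Finset.mem_product.2 ⟨ht, Finset.mem_univ i⟩, rfl⟩
  have hoffdiag : ∀ i j : E, i ≠ j →
      (∑ L ∈ 𝓛, lam L * (if i ∈ L then 1 else 0) * (if j ∈ L then 1 else 0)) = A i j := by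
    intro i j hij
    have hAij : A i j ∈ T := by
      rw [hT, Finset.mem_image]
      exact ⟨(i, j), Finset.mem_offDiag.2 ⟨Finset.mem_univ i, Finset.mem_univ j, hij⟩, rfl⟩
    have step1 : (∑ L ∈ 𝓛, lam L * (if i ∈ L then 1 else 0) * (if j ∈ L then 1 else 0))
        = ∑ L ∈ 𝓛, ∑ t ∈ T, if (i ∈ L ∧ j ∈ L) ∧ (∃ k, cls A t k = L) then uw T t else 0 := by
      apply Finset.sum_congr rfl
      intro L _
      simp only [hlam]
      by_cases h1 : i ∈ L
      · by_cases h2 : j ∈ L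
        · rw [if_pos h1, if_pos h2, mul_one, mul_one]
          apply Finset.sum_congr rfl
          intro t _
          by_cases h3 : ∃ k, cls A t k = L
          · rw [if_pos h3, if_pos ⟨⟨h1, h2⟩, h3⟩]
          · rw [if_neg h3, if_neg (by tauto)]
        · rw [if_neg h2, mul_zero]
          symm
          apply Finset.sum_eq_zero
          intro t _
          rw [if_neg (by tauto)]
      · rw [if_neg h1, mul_zero, zero_mul]
        symm
        apply Finset.sum_eq_zero
        intro t _
        rw [if_neg (by tauto)]
    rw [step1, Finset.sum_comm]
    have step2 : ∀ t ∈ T,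
        (∑ L ∈ 𝓛, if (i ∈ L ∧ j ∈ L) ∧ (∃ k, cls A t k = L) then uw T t else 0)
        = if A i j ≤ t then uw T t else 0 := by
      intro t ht
      have hequiv : ∀ L : Finset E,
          ((i ∈ L ∧ j ∈ L) ∧ (∃ k, cls A t k = L)) ↔ (L = cls A t i ∧ A i j ≤ t) := by
        intro L
        constructor
        · rintro ⟨⟨hi, hj⟩, k, rfl⟩
          have hL : cls A t k = cls A t i := (cls_eq_of_mem hsymm hum hi).symm
          refine ⟨hL, ?_⟩
          rw [hL, mem_cls] at hj
          rcases hj with rfl | hj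
          · exact absurd rfl hij
          · exact hj
        · rintro ⟨rfl, h⟩
          exact ⟨⟨self_mem_cls A t i, mem_cls.2 (Or.inr h)⟩, i, rfl⟩
      have hc : ∀ L ∈ 𝓛,
          (if (i ∈ L ∧ j ∈ L) ∧ (∃ k, cls A t k = L) then uw T t else 0)
          = (if L = cls A t i then (if A i j ≤ t then uw T t else 0) else 0) := by
        intro L _
        by_cases h1 : L = cls A t i <;> by_cases h2 : A i j ≤ t
        · rw [if_pos ((hequiv L).2 ⟨h1, h2⟩), if_pos h1, if_pos h2]
        · rw [if_neg (fun hc => h2 ((hequiv L).1 hc).2), if_pos h1, if_neg h2]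
        · rw [if_neg (fun hc => h1 ((hequiv L).1 hc).1), if_neg h1]
        · rw [if_neg (fun hc => h1 ((hequiv L).1 hc).1), if_neg h1]
      rw [Finset.sum_congr rfl hc,
        Finset.sum_ite_eq' 𝓛 (cls A t i) (fun _ => if A i j ≤ t then uw T t else 0),
        if_pos (hclsmem t ht i)]
    rw [Finset.sum_congr rfl step2]
    exact uw_key T (A i j) hAij
  refine ⟨𝓛, lam, fun i => A i i -
      ∑ L ∈ 𝓛, lam L * (if i ∈ L then 1 else 0) * (if i ∈ L then 1 else 0), ?_, ?_, ?_⟩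
  · intro X hX Y hY
    rw [h𝓛, Finset.mem_image] at hX hY
    obtain ⟨p, _, rfl⟩ := hX
    obtain ⟨q, _, rfl⟩ := hY
    exact cls_laminar hsymm hum p.1 q.1 p.2 q.2
  · intro L _
    rw [hlam]
    apply Finset.sum_nonpos
    intro t ht
    split_ifs
    · exact uw_nonpos (hTnp t ht)
    · exact le_refl 0
  · intro i j
    by_cases hij : i = j
    · subst hij
      rw [if_pos rfl]
      ring
    · rw [if_neg hij, add_zero, hoffdiag i j hij]
end

section
/- Let f: 2^E → ℝ be a set function and A ∈ ℝ^{E×E} symmetric. Suppose Hess_f(X)_{ij} ≤ A_{ij} ≤ 0 for all distinct i,j and all X ⊆ E∖{i,j}, and set A_{ii} := 2f(i | E∖{i}) - 2Σ_{k≠i} A_{ik}. Then for every i ∈ E, min over X ⊆ E∖{i} of [f(i | X) - Σ_{k∈X} A_{ik}] is attained at X = E∖{i}; consequently Σ_{k∈X} A_{ik} + A_{ii}/2 ≤ f(i | X) for all i ∈ E and X ⊆ E∖{i}. -/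
open Finset

/-- The discrete Hessian of a set function. -/
def discreteHess {E : Type*} [DecidableEq E] (f : Finset E → ℝ)
    (X : Finset E) (i j : E) : ℝ :=
  f (insert i (insert j X)) + f X - f (insert i X) - f (insert j X)

theorem monotonicity_from_hessian_bounds {E : Type*} [DecidableEq E] [Fintype E]
    (f : Finset E → ℝ) (A : E → E → ℝ) (hsymm : ∀ i j : E, A i j = A j i)
    (hbound : ∀ i j : E, i ≠ j → ∀ X : Finset E, X ⊆ (univ.erase i).erase j →
      discreteHess f X i j ≤ A i j ∧ A i j ≤ 0)
    (hdiag : ∀ i : E,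
      A i i = 2 * (f univ - f (univ.erase i)) - 2 * ∑ k ∈ univ.erase i, A i k) :
    ∀ i : E, ∀ X : Finset E, X ⊆ univ.erase i →
      ((f univ - f (univ.erase i)) - ∑ k ∈ univ.erase i, A i k ≤
        (f (insert i X) - f X) - ∑ k ∈ X, A i k) ∧
      (∑ k ∈ X, A i k + A i i / 2 ≤ f (insert i X) - f X) := by
  intro i
  set g : Finset E → ℝ := fun X => (f (insert i X) - f X) - ∑ k ∈ X, A i k with hg
  have key : ∀ n : ℕ, ∀ X : Finset E, X ⊆ univ.erase i →
      ((univ.erase i) \ X).card = n → g (univ.erase i) ≤ g X := by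
    intro n
    induction n with
    | zero =>
      intro X hX hc
      have : (univ.erase i) \ X = ∅ := Finset.card_eq_zero.mp hc
      have hXe : X = univ.erase i :=
        Finset.Subset.antisymm hX (by
          intro x hx
          by_contra hxX
          exact (Finset.notMem_empty x) (this ▸ Finset.mem_sdiff.mpr ⟨hx, hxX⟩))
      rw [hXe]
    | succ n ih =>
      intro X hX hc
      obtain ⟨j, hj⟩ : ((univ.erase i) \ X).Nonempty := by
        rw [← Finset.card_pos, hc]; omega
      rw [Finset.mem_sdiff] at hj
      obtain ⟨hji, hjX⟩ := hj
      have hjne : j ≠ i := Finset.ne_of_mem_erase hji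
      have hsub : insert j X ⊆ univ.erase i := Finset.insert_subset hji hX
      have hcard : ((univ.erase i) \ insert j X).card = n := by
        have : (univ.erase i) \ insert j X = ((univ.erase i) \ X).erase j := by
          ext x; simp [Finset.mem_sdiff, Finset.mem_erase, and_comm, and_assoc]
          tauto
        rw [this, Finset.card_erase_of_mem (Finset.mem_sdiff.mpr ⟨hji, hjX⟩), hc]
        omega
      have h1 : g (univ.erase i) ≤ g (insert j X) := ih _ hsub hcard
      have h2 : g (insert j X) ≤ g X := by
        have hXsub : X ⊆ (univ.erase i).erase j := by
          intro x hx
          exact Finset.mem_erase.mpr ⟨fun h => hjX (h ▸ hx), hX hx⟩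
        have hb := (hbound i j (Ne.symm hjne) X hXsub).1
        rw [discreteHess] at hb
        have hsum : ∑ k ∈ insert j X, A i k = A i j + ∑ k ∈ X, A i k :=
          Finset.sum_insert hjX
        simp only [hg]
        rw [hsum]
        linarith
      exact h1.trans h2
  intro X hX
  have huniv : insert i (univ.erase i) = univ := Finset.insert_erase (Finset.mem_univ i)
  have hmain := key _ X hX rfl
  simp only [hg, huniv] at hmain
  refine ⟨hmain, ?_⟩
  rw [hdiag i]
  linarith
end

section
/- Facility location decomposition: let f(X) = Σ_{i∈I} max_{j∈X} w_{ij} for X ≠ ∅ and f(∅) = 0, with w_{ij} ≥ 0. Define w_{i,min} = min_{j∈E} w_{ij}, f̃(X) = Σ_i max_{j∈X}(w_{ij} - w_{i,min}) (with f̃(∅)=0), ℓ(X) = Σ_{j∈X} f̃(j | E∖{j}), g = f̃ - ℓ, and h(X) = ℓ(X) + (Σ_i w_{i,min})·[X ≠ ∅]. Then f = g + h, g is monotone submodular and nonnegative, and h is M♮-concave and nonnegative. -/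
open Finset

/-- The facility location function `X ↦ Σ_i max_{j∈X} w i j`, with value 0 at `∅`. -/
noncomputable def facLoc {I E : Type*} [Fintype I] (w : I → E → ℝ) (X : Finset E) : ℝ :=
  ∑ i : I, if hX : X.Nonempty then X.sup' hX (w i) else 0

/-! ### Auxiliary lemmas -/

noncomputable def supF {E : Type*} (v : E → ℝ) (X : Finset E) : ℝ :=
  if hX : X.Nonempty then X.sup' hX v else 0

lemma facLoc_eq_sum_supF {I E : Type*} [Fintype I] (w : I → E → ℝ) (X : Finset E) :
    facLoc w X = ∑ i : I, supF (w i) X := rfl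

lemma supF_empty {E : Type*} (v : E → ℝ) : supF v (∅ : Finset E) = 0 := by
  simp [supF]

lemma supF_of_nonempty {E : Type*} (v : E → ℝ) {X : Finset E} (hX : X.Nonempty) :
    supF v X = X.sup' hX v := by
  simp [supF, hX]

lemma supF_nonneg {E : Type*} {v : E → ℝ} (hv : ∀ j, 0 ≤ v j) (X : Finset E) :
    0 ≤ supF v X := by
  unfold supF
  split
  · rename_i hX
    obtain ⟨j, hj⟩ := hX
    exact le_trans (hv j) (le_sup' v hj)
  · exact le_refl 0

lemma supF_mono {E : Type*} {v : E → ℝ} (hv : ∀ j, 0 ≤ v j) {X Y : Finset E}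
    (hXY : X ⊆ Y) : supF v X ≤ supF v Y := by
  rcases X.eq_empty_or_nonempty with rfl | hX
  · rw [supF_empty]; exact supF_nonneg hv Y
  · have hY : Y.Nonempty := hX.mono hXY
    rw [supF_of_nonempty v hX, supF_of_nonempty v hY]
    exact sup'_mono v hXY hX

lemma supF_submod {E : Type*} [DecidableEq E] {v : E → ℝ} (hv : ∀ j, 0 ≤ v j)
    (X Y : Finset E) : supF v (X ∩ Y) + supF v (X ∪ Y) ≤ supF v X + supF v Y := by
  rcases X.eq_empty_or_nonempty with rfl | hX
  · simp [supF_empty]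
  rcases Y.eq_empty_or_nonempty with rfl | hY
  · simp [supF_empty, add_comm]
  have hU : (X ∪ Y).Nonempty := hX.mono subset_union_left
  have hmax : supF v (X ∪ Y) = max (supF v X) (supF v Y) := by
    rw [supF_of_nonempty v hU, supF_of_nonempty v hX, supF_of_nonempty v hY]
    exact sup'_union hX hY v
  rcases le_total (supF v Y) (supF v X) with hc | hc
  · have h1 : supF v (X ∩ Y) ≤ supF v Y := supF_mono hv inter_subset_right
    rw [hmax, max_eq_left hc]
    linarith
  · have h1 : supF v (X ∩ Y) ≤ supF v X := supF_mono hv inter_subset_left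
    rw [hmax, max_eq_right hc]
    linarith

/-- A function increasing on single insertions is monotone. -/
lemma monotone_of_insert {E : Type*} [DecidableEq E] {f : Finset E → ℝ}
    (hf : ∀ (X : Finset E) (j : E), j ∉ X → f X ≤ f (insert j X)) : MonotoneSF f := by
  have key : ∀ (s X : Finset E), f X ≤ f (X ∪ s) := by
    intro s
    induction s using Finset.induction_on with
    | empty => intro X; simp
    | @insert a s ha ih =>
      intro X
      rcases Decidable.em (a ∈ X ∪ s) with hmem | hmem
      · have : X ∪ insert a s = X ∪ s := by
          rw [union_insert, insert_eq_self.mpr hmem]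
        rw [this]; exact ih X
      · have : X ∪ insert a s = insert a (X ∪ s) := by rw [union_insert]
        rw [this]
        exact le_trans (ih X) (hf _ a hmem)
  intro X Y hXY
  have := key (Y \ X) X
  rwa [union_sdiff_of_subset hXY] at this

theorem facility_location_decomposition {I E : Type*} [Fintype I] [Nonempty I]
    [Fintype E] [DecidableEq E] [Nonempty E]
    (w : I → E → ℝ) (hw : ∀ i j, 0 ≤ w i j) :
    -- the reduced facility location function f̃
    ∀ ft : Finset E → ℝ,
      (ft = facLoc (fun i j => w i j - univ.inf' univ_nonempty (w i))) →
    -- the modular part ℓ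
    ∀ ℓ : Finset E → ℝ, (ℓ = fun X => ∑ j ∈ X, (ft univ - ft (univ.erase j))) →
    ∀ g : Finset E → ℝ, (g = fun X => ft X - ℓ X) →
    ∀ h : Finset E → ℝ,
      (h = fun X => ℓ X + (∑ i : I, univ.inf' univ_nonempty (w i)) *
        (if X = ∅ then 0 else 1)) →
    (∀ X : Finset E, facLoc w X = g X + h X) ∧
    MonotoneSF g ∧ Submodular g ∧ (∀ X : Finset E, 0 ≤ g X) ∧
    MConcave h ∧ (∀ X : Finset E, 0 ≤ h X) := by
  intro ft hft ℓ hℓ g hg h hh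
  set m : I → ℝ := fun i => univ.inf' univ_nonempty (w i) with hm
  set v : I → E → ℝ := fun i j => w i j - m i with hv
  have hv0 : ∀ i j, 0 ≤ v i j := by
    intro i j
    have : m i ≤ w i j := inf'_le (w i) (mem_univ j)
    simp [hv]; linarith
  have hm0 : ∀ i, 0 ≤ m i := by
    intro i
    obtain ⟨j, _, hj⟩ := exists_mem_eq_inf' (univ_nonempty (α := E)) (w i)
    show (0:ℝ) ≤ univ.inf' univ_nonempty (w i)
    rw [hj]; exact hw i j
  -- ft basic facts
  have hft_empty : ft ∅ = 0 := by
    rw [hft, facLoc_eq_sum_supF]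
    simp [supF_empty]
  have hft_mono : MonotoneSF ft := by
    intro X Y hXY
    rw [hft, facLoc_eq_sum_supF, facLoc_eq_sum_supF]
    exact Finset.sum_le_sum fun i _ => supF_mono (hv0 i) hXY
  have hft_submod : Submodular ft := by
    intro X Y
    rw [hft, facLoc_eq_sum_supF, facLoc_eq_sum_supF, facLoc_eq_sum_supF, facLoc_eq_sum_supF,
      ← Finset.sum_add_distrib, ← Finset.sum_add_distrib]
    exact Finset.sum_le_sum fun i _ => supF_submod (hv0 i) X Y
  -- the modular coefficients
  set c : E → ℝ := fun j => ft univ - ft (univ.erase j) with hc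
  have hc0 : ∀ j, 0 ≤ c j := by
    intro j
    have := hft_mono (univ.erase j) univ (erase_subset j univ)
    simp [hc]; linarith
  have hℓ' : ∀ X : Finset E, ℓ X = ∑ j ∈ X, c j := by intro X; rw [hℓ]
  have hℓ_mod : ∀ X Y : Finset E, ℓ (X ∩ Y) + ℓ (X ∪ Y) = ℓ X + ℓ Y := by
    intro X Y
    rw [hℓ' , hℓ', hℓ', hℓ']
    rw [add_comm]
    exact sum_union_inter
  have hℓ_insert : ∀ (X : Finset E) (j : E), j ∉ X → ℓ (insert j X) = ℓ X + c j := by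
    intro X j hj
    rw [hℓ', hℓ', Finset.sum_insert hj, add_comm]
  have hℓ_erase : ∀ (X : Finset E) (j : E), j ∈ X → ℓ (X.erase j) = ℓ X - c j := by
    intro X j hj
    have := hℓ_insert (X.erase j) j (notMem_erase j X)
    rw [insert_erase hj] at this
    linarith
  have hℓ_nonneg : ∀ X : Finset E, 0 ≤ ℓ X := by
    intro X
    rw [hℓ']
    exact Finset.sum_nonneg fun j _ => hc0 j
  -- g monotone
  have hg_mono : MonotoneSF g := by
    apply monotone_of_insert
    intro X j hj
    -- key: ft (insert j X) - ft X ≥ c j by submodularity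
    have hsub : X ⊆ univ.erase j := fun x hx =>
      mem_erase.mpr ⟨fun hxj => hj (hxj ▸ hx), mem_univ x⟩
    have key := hft_submod (insert j X) (univ.erase j)
    have h1 : insert j X ∩ univ.erase j = X := by
      ext x
      simp only [mem_inter, mem_insert, mem_erase, mem_univ, and_true]
      constructor
      · rintro ⟨hx1 | hx1, hx2⟩
        · exact absurd hx1 hx2
        · exact hx1
      · intro hx
        exact ⟨Or.inr hx, fun hxj => hj (hxj ▸ hx), ⟩
    have h2 : insert j X ∪ univ.erase j = univ := by
      apply eq_univ_of_forall
      intro x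
      rcases Decidable.em (x = j) with rfl | hxj
      · exact mem_union_left _ (mem_insert_self x X)
      · exact mem_union_right _ (mem_erase.mpr ⟨hxj, mem_univ x⟩)
    rw [h1, h2] at key
    rw [hg]
    simp only
    rw [hℓ_insert X j hj]
    simp [hc] at key ⊢
    linarith
  have hg_empty : g ∅ = 0 := by
    rw [hg]; simp [hft_empty, hℓ']
  have hg_nonneg : ∀ X : Finset E, 0 ≤ g X := by
    intro X
    rw [← hg_empty]
    exact hg_mono ∅ X (empty_subset X)
  have hg_submod : Submodular g := by
    intro X Y
    rw [hg]
    simp only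
    have := hft_submod X Y
    have := hℓ_mod X Y
    linarith
  -- the decomposition
  set M : ℝ := ∑ i : I, m i with hM
  have hM0 : 0 ≤ M := Finset.sum_nonneg fun i _ => hm0 i
  have hdecomp : ∀ X : Finset E, facLoc w X = g X + h X := by
    intro X
    rw [hg, hh]
    simp only
    rcases X.eq_empty_or_nonempty with rfl | hX
    · simp [facLoc_eq_sum_supF, supF_empty, hft_empty]
    · have hXne : X ≠ ∅ := hX.ne_empty
      rw [if_neg hXne, mul_one]
      have : facLoc w X = ft X + M := by
        rw [hft, facLoc_eq_sum_supF, facLoc_eq_sum_supF, hM, ← Finset.sum_add_distrib]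
        apply Finset.sum_congr rfl
        intro i _
        rw [supF_of_nonempty _ hX, supF_of_nonempty _ hX]
        have : X.sup' hX (fun j => w i j - m i) = X.sup' hX (w i) - m i := by
          apply le_antisymm
          · apply sup'_le
            intro j hj
            have := le_sup' (w i) hj
            linarith
          · rw [sub_le_iff_le_add]
            apply sup'_le
            intro j hj
            have := le_sup' (fun j => w i j - m i) hj
            linarith
        rw [this]
        ring
      rw [this]
      ring
  -- h nonneg
  have hh_nonneg : ∀ X : Finset E, 0 ≤ h X := by
    intro X
    rw [hh]
    simp only
    rcases Decidable.em (X = ∅) with rfl | hX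
    · simp [hℓ']
    · rw [if_neg hX, mul_one]
      have := hℓ_nonneg X
      linarith
  -- h M♮-concave
  have hh_mconcave : MConcave h := by
    intro X Y i hi
    rw [mem_sdiff] at hi
    obtain ⟨hiX, hiY⟩ := hi
    have hXne : X ≠ ∅ := ne_empty_of_mem hiX
    have hiY' : i ∉ insert i Y → False := fun hc => hc (mem_insert_self i Y)
    have hins_ne : insert i Y ≠ ∅ := ne_empty_of_mem (mem_insert_self i Y)
    have hins : ℓ (insert i Y) = ℓ Y + c i := hℓ_insert Y i hiY
    have herase : ℓ (X.erase i) = ℓ X - c i := hℓ_erase X i hiX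
    rcases Decidable.em (X.erase i = ∅ ∧ Y ≠ ∅) with ⟨hXe, hYne⟩ | hcase
    · -- exchange case: X = {i}, Y nonempty
      right
      obtain ⟨j, hj⟩ := nonempty_of_ne_empty hYne
      have hji : j ≠ i := fun hji => hiY (hji ▸ hj)
      have hjX : j ∉ X := by
        intro hjX
        have : j ∈ X.erase i := mem_erase.mpr ⟨hji, hjX⟩
        rw [hXe] at this
        exact notMem_empty j this
      refine ⟨j, mem_sdiff.mpr ⟨hj, hjX⟩, ?_⟩
      have h1 : ℓ (insert j (X.erase i)) = ℓ (X.erase i) + c j :=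
        hℓ_insert _ j (fun hc => hjX (mem_of_mem_erase hc))
      have h2 : ℓ ((insert i Y).erase j) = ℓ (insert i Y) - c j :=
        hℓ_erase _ j (mem_insert_of_mem hj)
      have h3 : insert j (X.erase i) ≠ ∅ := ne_empty_of_mem (mem_insert_self j _)
      have h4 : (insert i Y).erase j ≠ ∅ :=
        ne_empty_of_mem (mem_erase.mpr ⟨fun hc => hji hc.symm, mem_insert_self i Y⟩)
      rw [hh]
      simp only
      rw [if_neg hXne, if_neg hYne, if_neg h3, if_neg h4, h1, h2, hins, herase]
      ring_nf
      linarith [le_refl (0:ℝ)]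
    · -- first option
      left
      rw [hh]
      simp only
      rw [if_neg hXne, if_neg hins_ne, hins, herase]
      rcases Decidable.em (Y = ∅) with rfl | hYne
      · rw [if_pos rfl]
        have : (if X.erase i = ∅ then (0:ℝ) else 1) ≥ 0 := by positivity
        have hMind : M * (if X.erase i = ∅ then (0:ℝ) else 1) ≥ 0 := by positivity
        linarith
      · have hXe : X.erase i ≠ ∅ := by
          rcases Decidable.em (X.erase i = ∅) with he | he
          · exact absurd ⟨he, hYne⟩ hcase
          · exact he
        rw [if_neg hYne, if_neg hXe]
        linarith
  exact ⟨hdecomp, hg_mono, hg_submod, hg_nonneg, hh_mconcave, hh_nonneg⟩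
end
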